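/- Correctness of the multi-hop Re-Sign algorithm (change of variables): fix ℓ ≥ 1 and μ, x_i, x_j, t_1, …, t_ℓ, r_0, …, r_ℓ ∈ ZMod p with x_j ≠ 0. Let the input be the level-(ℓ+1) signature σ_0 = g^(μ·x_i·t_1⋯t_ℓ), σ_k = g^(x_i·t_1⋯t_{ℓ+1−k}) for 1 ≤ k ≤ ℓ, σ_{ℓ+k} = g^(t_k) for 1 ≤ k ≤ ℓ, and define the output σ'_0 = σ_0^(r_0⋯r_ℓ); σ'_k = σ_k^(r_0⋯r_{ℓ+1−k}) for 1 ≤ k ≤ ℓ; σ'_{ℓ+1} = (g^(x_i))^(r_0); σ'_{ℓ+2} = (g^(x_i·x_j⁻¹))^(r_0); σ'_k = σ_{k−2}^(r_{k−ℓ−2}) for ℓ+3 ≤ k ≤ 2ℓ+2. Then, setting t̃_0 = r_0·x_i·x_j⁻¹ and t̃_k = r_k·t_k for 1 ≤ k ≤ ℓ, the output is a level-(ℓ+2) signature under x_j: σ'_0 = g^(μ·x_j·t̃_0·t̃_1⋯t̃_ℓ), σ'_k = g^(x_j·t̃_0·t̃_1⋯t̃_{ℓ+1−k}) for 1 ≤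 k ≤ ℓ+1, and σ'_{ℓ+1+m} = g^(t̃_{m−1}) for 1 ≤ m ≤ ℓ+1. -/

import Mathlib

/-- Correctness of the multi-hop Re-Sign algorithm (change of variables):
re-randomizing a level-(ℓ+1) signature for `x_i` with exponents
`r_0, …, r_ℓ` and the re-signature key `g^(x_i·x_j⁻¹)` yields a level-(ℓ+2)
signature for `x_j` with randomness `t̃_0 = r_0·x_i·x_j⁻¹`, `t̃_k = r_k·t_k`. -/
theorem stmt_4 {p : ℕ} [Fact p.Prime] {G : Type*} [CommGroup G]
    (g : G) (hg : orderOf g = p)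
    (ℓ : ℕ) (hℓ : 1 ≤ ℓ) (μ xi xj : ZMod p) (hxj : xj ≠ 0)
    (t r : ℕ → ZMod p)
    -- the input level-(ℓ+1) signature
    (σ : ℕ → G)
    (hσ0 : σ 0 = g ^ ((μ * xi * ∏ i ∈ Finset.Icc 1 ℓ, t i).val))
    (hσk : ∀ k, 1 ≤ k → k ≤ ℓ →
      σ k = g ^ ((xi * ∏ i ∈ Finset.Icc 1 (ℓ + 1 - k), t i).val))
    (hσt : ∀ k, 1 ≤ k → k ≤ ℓ → σ (ℓ + k) = g ^ ((t k).val))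
    -- the output of Re-Sign
    (σ' : ℕ → G)
    (hσ'0 : σ' 0 = σ 0 ^ ((∏ i ∈ Finset.range (ℓ + 1), r i).val))
    (hσ'k : ∀ k, 1 ≤ k → k ≤ ℓ →
      σ' k = σ k ^ ((∏ i ∈ Finset.range (ℓ + 2 - k), r i).val))
    (hσ'l1 : σ' (ℓ + 1) = (g ^ (xi.val)) ^ ((r 0).val))
    (hσ'l2 : σ' (ℓ + 2) = (g ^ ((xi * xj⁻¹).val)) ^ ((r 0).val))
    (hσ'hi : ∀ k, ℓ + 3 ≤ k → k ≤ 2 * ℓ + 2 →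
      σ' k = σ (k - 2) ^ ((r (k - ℓ - 2)).val))
    -- the new randomness
    (tt : ℕ → ZMod p)
    (htt : ∀ k, tt k = if k = 0 then r 0 * xi * xj⁻¹ else r k * t k) :
    σ' 0 = g ^ ((μ * xj * ∏ i ∈ Finset.range (ℓ + 1), tt i).val) ∧
    (∀ k, 1 ≤ k → k ≤ ℓ + 1 →
      σ' k = g ^ ((xj * ∏ i ∈ Finset.range (ℓ + 2 - k), tt i).val)) ∧
    (∀ m, 1 ≤ m → m ≤ ℓ + 1 → σ' (ℓ + 1 + m) = g ^ ((tt (m - 1)).val)) := by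
  have key : ∀ a b : ZMod p, (g ^ a.val) ^ b.val = g ^ ((a * b).val) := by
    intro a b
    rw [← pow_mul, ZMod.val_mul]
    conv_lhs => rw [← pow_mod_orderOf, hg]
  have keq : ∀ a b : ZMod p, a = b → g ^ a.val = g ^ b.val := by
    intro a b h; rw [h]
  have split : ∀ (f : ℕ → ZMod p) (n : ℕ),
      ∏ i ∈ Finset.range (n+1), f i = f 0 * ∏ i ∈ Finset.Icc 1 n, f i := by
    intro f n
    rw [Finset.range_eq_Ico, ← Finset.Ico_add_one_right_eq_Icc,
      Finset.prod_eq_prod_Ico_succ_bot (Nat.succ_pos n)]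
    rfl
  have hxj1 : xj * xj⁻¹ = 1 := ZMod.mul_inv_of_unit _ (Ne.isUnit hxj)
  have ttprod : ∀ n : ℕ, ∏ i ∈ Finset.Icc 1 n, tt i =
      (∏ i ∈ Finset.Icc 1 n, r i) * ∏ i ∈ Finset.Icc 1 n, t i := by
    intro n
    rw [← Finset.prod_mul_distrib]
    apply Finset.prod_congr rfl
    intro i hi
    rw [htt i, if_neg]
    simp only [Finset.mem_Icc] at hi
    omega
  refine ⟨?_, ?_, ?_⟩
  · rw [hσ'0, hσ0, key]
    apply keq
    rw [split tt ℓ, split r ℓ, ttprod, htt 0, if_pos rfl]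
    field_simp
  · intro k hk1 hk2
    rcases Nat.lt_or_ge k (ℓ + 1) with h | h
    · have hkℓ : k ≤ ℓ := by omega
      rw [hσ'k k hk1 hkℓ, hσk k hk1 hkℓ, key]
      apply keq
      have e1 : ℓ + 2 - k = (ℓ + 1 - k) + 1 := by omega
      rw [e1, split tt, split r, ttprod, htt 0, if_pos rfl]
      field_simp
    · have hk : k = ℓ + 1 := by omega
      subst hk
      rw [hσ'l1, key]
      apply keq
      have : ℓ + 2 - (ℓ + 1) = 1 := by omega
      rw [this]
      simp [htt 0]
      field_simp
  · intro m hm1 hm2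
    rcases Nat.lt_or_ge m 2 with h | h
    · have hm : m = 1 := by omega
      subst hm
      rw [hσ'l2, key]
      apply keq
      simp [htt 0]
      ring
    · have e1 : ℓ + 1 + m - 2 = ℓ + (m - 1) := by omega
      have e2 : ℓ + 1 + m - ℓ - 2 = m - 1 := by omega
      rw [hσ'hi (ℓ + 1 + m) (by omega) (by omega), e1, e2,
        hσt (m - 1) (by omega) (by omega), key]
      apply keq
      rw [htt (m - 1), if_neg (by omega)]
      ring
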